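/- Let M be a real symmetric c×c matrix with M·𝟙 = μ·𝟙, let β, η ∈ ℝ, and let M' = β·I_c + η·J − M, where J is the c×c all-ones matrix. Then for every x ∈ ℝ^c with 𝟙ᵀx = 0 and every t ∈ ℝ, exp(i·t·M') · x = e^{iβt} · ( exp(−i·t·M) · x ). (Taking (β, η) = (−1, 1), (c+1, −1), (c−1, 1) recovers the relation between the transition matrices of a graph and its complement relative to the adjacency, Laplacian, and signless Laplacian matrices, respectively.) -/

import Mathlib

open Matrix

/-- The transition matrix `U_R(t) = exp(i·t·R)` of a real square matrix `R`,
as a complex matrix. -/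
noncomputable def U {ι : Type*} [Fintype ι] [DecidableEq ι]
    (R : Matrix ι ι ℝ) (t : ℝ) : Matrix ι ι ℂ :=
  NormedSpace.exp ((Complex.I * (t : ℂ)) • R.map (Complex.ofReal ·))


attribute [local instance] Matrix.linftyOpNormedRing Matrix.linftyOpNormedAlgebra

lemma exp_mulVec_eigen {n : Type*} [Fintype n] [DecidableEq n]
    (S : Matrix n n ℂ) (y : n → ℂ) (a : ℂ) (h : S *ᵥ y = a • y) :
    NormedSpace.exp S *ᵥ y = Complex.exp a • y := by
  have hpow : ∀ k : ℕ, S ^ k *ᵥ y = a ^ k • y := by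
    intro k
    induction k with
    | zero => simp
    | succ k ih =>
      rw [pow_succ, ← Matrix.mulVec_mulVec, h, Matrix.mulVec_smul, ih, smul_smul,
        pow_succ, mul_comm]
  let f : Matrix n n ℂ →ₗ[ℂ] (n → ℂ) :=
    { toFun := fun A => A *ᵥ y
      map_add' := fun A B => Matrix.add_mulVec A B y
      map_smul' := fun c A => Matrix.smul_mulVec c A y }
  let F : Matrix n n ℂ →L[ℂ] (n → ℂ) := LinearMap.toContinuousLinearMap f
  have hF : ∀ A, F A = A *ᵥ y := fun A => rfl
  have hsum : Summable fun k : ℕ => ((Nat.factorial k : ℂ))⁻¹ • S ^ k :=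
    NormedSpace.expSeries_summable' S
  calc NormedSpace.exp S *ᵥ y = F (∑' k : ℕ, ((Nat.factorial k : ℂ))⁻¹ • S ^ k) := by
        rw [hF, NormedSpace.exp_eq_tsum (𝕂 := ℂ)]
    _ = ∑' k : ℕ, F (((Nat.factorial k : ℂ))⁻¹ • S ^ k) := F.map_tsum hsum
    _ = ∑' k : ℕ, (((Nat.factorial k : ℂ))⁻¹ * a ^ k) • y := by
        refine tsum_congr fun k => ?_
        rw [hF, Matrix.smul_mulVec, hpow, smul_smul]
    _ = (∑' k : ℕ, ((Nat.factorial k : ℂ))⁻¹ * a ^ k) • y := by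
        refine Summable.tsum_smul_const ?_ y
        simpa using NormedSpace.expSeries_summable' (𝕂 := ℂ) a
    _ = Complex.exp a • y := by
        rw [Complex.exp_eq_exp_ℂ, NormedSpace.exp_eq_tsum (𝕂 := ℂ)]
        simp [smul_eq_mul]

/-- Let `M` be real symmetric with `M·𝟙 = μ·𝟙` and
`M' = β·I + η·J − M`. Then for every `x` with `𝟙ᵀx = 0` and every `t ∈ ℝ`,
`exp(itM')·x = e^{iβt}·(exp(−itM)·x)`. -/
theorem stmt11 (c : ℕ)
    (M : Matrix (Fin c) (Fin c) ℝ) (hM : M.IsSymm)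
    (μ : ℝ) (hμ : M *ᵥ (fun _ => (1 : ℝ)) = μ • fun _ => (1 : ℝ))
    (β η : ℝ)
    (M' : Matrix (Fin c) (Fin c) ℝ)
    (hM' : M' = β • (1 : Matrix (Fin c) (Fin c) ℝ) +
      η • (Matrix.of fun (_ : Fin c) (_ : Fin c) => (1 : ℝ)) - M) :
    ∀ x : Fin c → ℝ, (∑ i, x i = 0) → ∀ t : ℝ,
      U M' t *ᵥ (fun i => (x i : ℂ)) =
        Complex.exp (Complex.I * β * t) • (U M (-t) *ᵥ fun i => (x i : ℂ)) := by
  intro x hx t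
  set N : Matrix (Fin c) (Fin c) ℂ := M.map (Complex.ofReal ·) with hN
  set Jc : Matrix (Fin c) (Fin c) ℂ :=
    Matrix.of fun _ _ => (1 : ℂ) with hJc
  have hrow : ∀ i, ∑ k, M i k = μ := by
    intro i
    have := congrFun hμ i
    simpa [Matrix.mulVec, dotProduct] using this
  have hcol : ∀ j, ∑ k, M k j = μ := by
    intro j
    refine (Finset.sum_congr rfl fun k _ => ?_).trans (hrow j)
    exact (congrFun (congrFun hM k) j).symm
  have hcomm : Commute Jc N := by
    ext i j
    simp only [Matrix.mul_apply, hJc, hN, Matrix.map_apply, Matrix.of_apply, one_mul, mul_one]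
    norm_cast
    rw [hcol j, hrow i]
  have hdecomp : (Complex.I * (t : ℂ)) • M'.map (Complex.ofReal ·) =
      ((Complex.I * t * β) • (1 : Matrix (Fin c) (Fin c) ℂ) + (Complex.I * t * η) • Jc)
        + (Complex.I * (-t : ℝ)) • N := by
    subst hM'
    ext i j
    simp only [Matrix.smul_apply, Matrix.add_apply, Matrix.sub_apply, Matrix.map_apply,
      Matrix.one_apply, Matrix.of_apply, hJc, hN, smul_eq_mul]
    by_cases h : i = j <;> simp [h] <;> ring
  set A : Matrix (Fin c) (Fin c) ℂ :=
    (Complex.I * t * β) • (1 : Matrix (Fin c) (Fin c) ℂ) + (Complex.I * t * η) • Jc with hA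
  set B : Matrix (Fin c) (Fin c) ℂ := (Complex.I * (-t : ℝ)) • N with hB
  have hAB : Commute A B :=
    Commute.add_left (((Commute.one_left N).smul_right _).smul_left _)
      (((hcomm.smul_right _).smul_left _))
  have hxc : ∑ i, (x i : ℂ) = 0 := by norm_cast
  have hAx : A *ᵥ (fun i => (x i : ℂ)) = (Complex.I * t * β) • (fun i => (x i : ℂ)) := by
    rw [hA, Matrix.add_mulVec, Matrix.smul_mulVec, Matrix.smul_mulVec,
      Matrix.one_mulVec]
    have hz : Jc *ᵥ (fun i => (x i : ℂ)) = 0 := by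
      ext i
      simp [Matrix.mulVec, dotProduct, hJc, hxc]
    rw [hz, smul_zero, add_zero]
  have key : U M' t = NormedSpace.exp B * NormedSpace.exp A := by
    rw [U, hdecomp, add_comm A B]
    exact Matrix.exp_add_of_commute B A hAB.symm
  rw [key, ← Matrix.mulVec_mulVec, exp_mulVec_eigen A _ _ hAx, Matrix.mulVec_smul,
    show Complex.I * (β : ℂ) * t = Complex.I * t * β by ring,
    show U M (-t) = NormedSpace.exp B from rfl]
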